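/- Every sequentiable structure satisfies the GCLF-axiom: for all m,v,x, if m ≤_M v and m ≤_M x*v then m ≤_M x*m. -/

import Mathlib

def dvdL {M : Type*} [Monoid M] (a b : M) : Prop := ∃ c, a * c = b

theorem sequentiable_GCLF {M : Type*} [Monoid M] (norm : M → NNReal)
    (hInf : ∀ a b : M, ∃! l : M, (dvdL l a ∧ dvdL l b) ∧
      ∀ m, dvdL m a → dvdL m b → dvdL m l)
    (hHom : ∀ a b : M, norm (a * b) = norm a + norm b)
    (hKer : ∀ a : M, norm a = 0 ↔ a = 1)
    (hSeq : ∀ a b c : M, dvdL a (b * c) → norm a ≤ norm b → dvdL a b) :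
    ∀ m v x : M, dvdL m v → dvdL m (x * v) → dvdL m (x * m) := by
  intro m v x hmv hmxv
  obtain ⟨d, hd⟩ := hmv
  -- norm of powers
  have hpow : ∀ k : ℕ, norm (x ^ k) = (k : NNReal) * norm x := by
    intro k
    induction k with
    | zero => simp [(hKer 1).2 rfl]
    | succ n ih =>
        rw [pow_succ, hHom, ih, Nat.cast_succ, add_mul, one_mul]
  by_cases hx : norm x = 0
  · have hx1 : x = 1 := (hKer x).1 hx
    exact ⟨1, by rw [hx1, one_mul, mul_one]⟩
  · -- main claim: x^k ≤ m whenever k * ‖x‖ ≤ ‖m‖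
    have claim : ∀ k : ℕ, (k : NNReal) * norm x ≤ norm m → dvdL (x ^ k) m := by
      intro k
      induction k with
      | zero => intro _; exact ⟨m, by rw [pow_zero, one_mul]⟩
      | succ n ih =>
          intro hkn
          have hn : (n : NNReal) * norm x ≤ norm m := by
            refine le_trans ?_ hkn
            gcongr
            exact_mod_cast Nat.le_succ n
          obtain ⟨s, hs⟩ := ih hn
          obtain ⟨c, hc⟩ := hmxv
          have hmc : m * c = x ^ (n + 1) * (s * d) := by
            rw [hc, ← hd, ← hs, pow_succ', mul_assoc, mul_assoc]
          refine hSeq _ _ c ⟨s * d, ?_⟩ ?_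
          · rw [← hmc]
          · rwa [hpow]
    set b := norm x with hb
    have hbpos : 0 < b := pos_iff_ne_zero.mpr hx
    set k : ℕ := ⌊(norm m) / b⌋₊ with hk
    have h1 : (k : NNReal) * b ≤ norm m := by
      calc (k : NNReal) * b ≤ (norm m / b) * b := by
            gcongr
            exact Nat.floor_le zero_le
        _ = norm m := div_mul_cancel₀ _ (ne_of_gt hbpos)
    have h2 : norm m < ((k : NNReal) + 1) * b := by
      calc norm m = (norm m / b) * b := (div_mul_cancel₀ _ (ne_of_gt hbpos)).symm
        _ < ((k : NNReal) + 1) * b := by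
            refine mul_lt_mul_of_pos_right ?_ hbpos
            exact_mod_cast Nat.lt_floor_add_one (norm m / b)
    obtain ⟨s, hs⟩ := claim k h1
    obtain ⟨c, hc⟩ := hmxv
    -- m ≤ x^(k+1)
    have hm1 : dvdL m (x ^ (k + 1)) := by
      have hmc : m * c = x ^ (k + 1) * (s * d) := by
        rw [hc, ← hd, ← hs, pow_succ', mul_assoc, mul_assoc]
      refine hSeq _ _ (s * d) ⟨c, hmc⟩ ?_
      rw [hpow]
      push_cast
      exact le_of_lt h2
    -- x^(k+1) ≤ x * m
    have hm2 : dvdL (x ^ (k + 1)) (x * m) := ⟨s, by rw [← hs, pow_succ', mul_assoc]⟩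
    obtain ⟨t1, ht1⟩ := hm1
    obtain ⟨t2, ht2⟩ := hm2
    exact ⟨t1 * t2, by rw [← mul_assoc, ht1, ht2]⟩
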